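/- arXiv:1712.02690 — 2 statements merged into one kernel-verified Lean document; each statement's English description precedes it below -/
import Mathlib

section
/- For every ε ∈ [0,1) and every integer k ≥ 1, any point (δ₀,…,δ_{k−1}) ∈ [0,1]^k at which R_ε attains its maximum over [0,1]^k has all coordinates in the open interval (0, 1/2) and satisfies the recursion (∗): δ_j = δ_{j+1} / (δ_{j+1} + (1−δ_{j+1})·((1−δ_{j+1})/(1−δ_{j+2}))^{ε̄}) for every j = 0,…,k−2 (with the convention δ̄_k := 1, i.e., the j = k−2 equation reads δ_{k−2} = δ_{k−1}/(δ_{k−1} + (1−δ_{k−1})^{1+ε̄})). -/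
/-- The binary entropy function (base 2), with `H2 0 = H2 1 = 0`. -/
noncomputable def H2 (x : ℝ) : ℝ := -(x * Real.logb 2 x) - (1 - x) * Real.logb 2 (1 - x)

/-- The function `R_ε(δ₀,…,δ_{k−1})`. -/
noncomputable def Rfun (ε : ℝ) (k : ℕ) (δ : ℕ → ℝ) : ℝ :=
  (∑ i ∈ Finset.range k, (1 - ε) ^ (i + 1) * H2 (δ i) * ∏ m ∈ Finset.range i, δ m) /
  (1 + ∑ i ∈ Finset.range k, (1 - ε) ^ (i + 1) * ∏ m ∈ Finset.range (i + 1), δ m)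

/-- The recursion (∗): for every `j = 0,…,k−2`,
`δ_j = δ_{j+1} / (δ_{j+1} + (1−δ_{j+1})·((1−δ_{j+1})/(1−δ_{j+2}))^{ε̄})`,
with the convention `δ̄_k := 1` (i.e. for `j = k−2` the inner denominator `1−δ_{j+2}` is
replaced by `1`).  The exponentiation is the real power `x ^ (1−ε)`. -/
def SatisfiesRec (ε : ℝ) (k : ℕ) (δ : ℕ → ℝ) : Prop :=
  ∀ j : ℕ, j + 2 ≤ k →
    δ j = δ (j + 1) /
      (δ (j + 1) + (1 - δ (j + 1)) *
        ((1 - δ (j + 1)) / (if j + 2 = k then 1 else 1 - δ (j + 2))) ^ (1 - ε))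

section Aux

lemma H2_zero : H2 0 = 0 := by simp [H2]

lemma H2_eq (x : ℝ) : H2 x = (-(x * Real.log x) - (1 - x) * Real.log (1 - x)) / Real.log 2 := by
  unfold H2 Real.logb; ring

lemma log2_pos : (0:ℝ) < Real.log 2 := Real.log_pos one_lt_two

/-- Gibbs' inequality core, natural log version. -/
lemma gibbs_core (p x : ℝ) (hp : p ∈ Set.Ioo (0:ℝ) 1) (hx : x ∈ Set.Icc (0:ℝ) 1)
    (hne : x ≠ p) :
    x * Real.log p + (1 - x) * Real.log (1 - p) <
      x * Real.log x + (1 - x) * Real.log (1 - x) := by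
  obtain ⟨hp0, hp1⟩ := hp
  obtain ⟨hx0, hx1⟩ := hx
  rcases eq_or_lt_of_le hx0 with h0 | h0
  · -- x = 0
    subst h0
    simp only [zero_mul, sub_zero, one_mul, zero_add, Real.log_one]
    have : Real.log (1 - p) < 0 := Real.log_neg (by linarith) (by linarith)
    linarith
  rcases eq_or_lt_of_le hx1 with h1 | h1
  · -- x = 1
    subst h1
    simp only [one_mul, sub_self, zero_mul, add_zero, Real.log_one]
    have : Real.log p < 0 := Real.log_neg hp0 hp1
    linarith
  · -- 0 < x < 1
    have hq0 : (0:ℝ) < 1 - x := by linarith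
    have h1' : x * Real.log p - x * Real.log x = x * Real.log (p / x) := by
      rw [Real.log_div (ne_of_gt hp0) (ne_of_gt h0)]; ring
    have h2' : (1 - x) * Real.log (1 - p) - (1 - x) * Real.log (1 - x)
        = (1 - x) * Real.log ((1 - p) / (1 - x)) := by
      rw [Real.log_div (by linarith) (ne_of_gt hq0)]; ring
    have hA : x * Real.log (p / x) < p - x := by
      have hne1 : p / x ≠ 1 := by
        intro h
        rw [div_eq_one_iff_eq (ne_of_gt h0)] at h
        exact hne h.symm
      have := Real.log_lt_sub_one_of_pos (div_pos hp0 h0) hne1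
      calc x * Real.log (p / x) < x * (p / x - 1) := by
            exact (mul_lt_mul_iff_right₀ h0).mpr this
        _ = p - x := by field_simp
    have hB : (1 - x) * Real.log ((1 - p) / (1 - x)) < x - p := by
      have hne2 : (1 - p) / (1 - x) ≠ 1 := by
        intro h
        rw [div_eq_one_iff_eq (ne_of_gt hq0)] at h
        apply hne; linarith
      have := Real.log_lt_sub_one_of_pos (div_pos (by linarith : (0:ℝ) < 1 - p) hq0) hne2
      calc (1 - x) * Real.log ((1 - p) / (1 - x)) < (1 - x) * ((1 - p) / (1 - x) - 1) := by
            exact (mul_lt_mul_iff_right₀ hq0).mpr this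
        _ = x - p := by field_simp; ring
    linarith

/-- Gibbs' inequality: strict tangent-line bound for `H2`. -/
lemma gibbs (p x : ℝ) (hp : p ∈ Set.Ioo (0:ℝ) 1) (hx : x ∈ Set.Icc (0:ℝ) 1)
    (hne : x ≠ p) :
    H2 x < H2 p + Real.logb 2 ((1 - p) / p) * (x - p) := by
  obtain ⟨hp0, hp1⟩ := hp
  have hlogb : Real.logb 2 ((1 - p) / p) = (Real.log (1 - p) - Real.log p) / Real.log 2 := by
    rw [Real.logb_div (by linarith) (ne_of_gt hp0)]
    unfold Real.logb; ring
  have key := gibbs_core p x ⟨hp0, hp1⟩ hx hne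
  rw [H2_eq, H2_eq, hlogb]
  have hcomb : (-(p * Real.log p) - (1 - p) * Real.log (1 - p)) / Real.log 2 +
      (Real.log (1 - p) - Real.log p) / Real.log 2 * (x - p) =
      (-(p * Real.log p) - (1 - p) * Real.log (1 - p) +
        (Real.log (1 - p) - Real.log p) * (x - p)) / Real.log 2 := by ring
  rw [hcomb, div_lt_div_iff_of_pos_right log2_pos]
  nlinarith [key]

/-- Unique maximizer of `b·H2 + c·x` on `[0,1]`. -/
lemma argmax_lemma (b c : ℝ) (hb : 0 < b) (y : ℝ) (hy : y ∈ Set.Icc (0:ℝ) 1)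
    (hm : ∀ x ∈ Set.Icc (0:ℝ) 1, b * H2 x + c * x ≤ b * H2 y + c * y) :
    y ∈ Set.Ioo (0:ℝ) 1 ∧ Real.logb 2 ((1 - y) / y) = -(c / b) := by
  set t : ℝ := -(c / b) with ht
  set p : ℝ := (1 + (2:ℝ) ^ t)⁻¹ with hpdef
  have h2t : (0:ℝ) < (2:ℝ) ^ t := Real.rpow_pos_of_pos two_pos t
  have hd : (0:ℝ) < 1 + (2:ℝ) ^ t := by linarith
  have hp0 : 0 < p := inv_pos.mpr hd
  have hp1 : p < 1 := by
    rw [hpdef]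
    rw [inv_lt_one₀ hd]; linarith
  have hratio : (1 - p) / p = (2:ℝ) ^ t := by
    rw [hpdef]; field_simp; ring
  have hlogp : Real.logb 2 ((1 - p) / p) = t := by
    rw [hratio]; exact Real.logb_rpow two_pos (by norm_num)
  have hyp : y = p := by
    by_contra hne
    have hg := gibbs p y ⟨hp0, hp1⟩ hy hne
    have hmp := hm p ⟨le_of_lt hp0, le_of_lt hp1⟩
    rw [hlogp] at hg
    -- b * H2 y < b * H2 p + b * t * (y - p)
    have : b * H2 y < b * H2 p + b * t * (y - p) := by nlinarith
    have hbt : b * t * (y - p) = -c * (y - p) := by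
      have : b * t = -c := by rw [ht]; field_simp
      rw [this]
    rw [hbt] at this
    linarith
  subst hyp
  exact ⟨⟨hp0, hp1⟩, hlogp⟩

lemma H2_zero' : H2 0 = 0 := by simp [H2]

open Finset

noncomputable def numf (ε : ℝ) (k : ℕ) (δ : ℕ → ℝ) : ℝ :=
  ∑ i ∈ Finset.range k, (1 - ε) ^ (i + 1) * H2 (δ i) * ∏ m ∈ Finset.range i, δ m

noncomputable def denf (ε : ℝ) (k : ℕ) (δ : ℕ → ℝ) : ℝ :=
  1 + ∑ i ∈ Finset.range k, (1 - ε) ^ (i + 1) * ∏ m ∈ Finset.range (i + 1), δ m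

lemma Rfun_eq (ε : ℝ) (k : ℕ) (δ : ℕ → ℝ) : Rfun ε k δ = numf ε k δ / denf ε k δ := rfl

/-- Tail numerator from index `r` on. -/
noncomputable def NTr (ε : ℝ) (k : ℕ) (δ : ℕ → ℝ) (r : ℕ) : ℝ :=
  ∑ i ∈ Finset.range (k - r), (1 - ε) ^ (i + 1) * H2 (δ (r + i)) * ∏ m ∈ Finset.range i, δ (r + m)

/-- Tail denominator from index `r` on. -/
noncomputable def DTr (ε : ℝ) (k : ℕ) (δ : ℕ → ℝ) (r : ℕ) : ℝ :=
  1 + ∑ i ∈ Finset.range (k - r), (1 - ε) ^ (i + 1) * ∏ m ∈ Finset.range (i + 1), δ (r + m)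

lemma NTr_k (ε : ℝ) (k : ℕ) (δ : ℕ → ℝ) : NTr ε k δ k = 0 := by simp [NTr]

lemma DTr_k (ε : ℝ) (k : ℕ) (δ : ℕ → ℝ) : DTr ε k δ k = 1 := by simp [DTr]

lemma denf_pos (ε : ℝ) (k : ℕ) (δ : ℕ → ℝ) (hε : ε ≤ 1) (hδ : ∀ i < k, 0 ≤ δ i) :
    0 < denf ε k δ := by
  have h : 0 ≤ ∑ i ∈ Finset.range k, (1 - ε) ^ (i + 1) * ∏ m ∈ Finset.range (i + 1), δ m := by
    apply Finset.sum_nonneg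
    intro i hi
    apply mul_nonneg (pow_nonneg (by linarith) _)
    apply Finset.prod_nonneg
    intro m hm
    exact hδ m (by simp only [Finset.mem_range] at *; omega)
  unfold denf; linarith

/-- Decomposition of the numerator under a single-coordinate update. -/
lemma numf_update (ε : ℝ) (k : ℕ) (δ : ℕ → ℝ) (j : ℕ) (hj : j < k) (x : ℝ) :
    numf ε k (Function.update δ j x)
      = (∑ i ∈ Finset.range j, (1 - ε) ^ (i + 1) * H2 (δ i) * ∏ m ∈ Finset.range i, δ m)
        + ((1 - ε) ^ (j + 1) * ∏ m ∈ Finset.range j, δ m) * H2 x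
        + (((1 - ε) ^ (j + 1) * ∏ m ∈ Finset.range j, δ m) * NTr ε k δ (j + 1)) * x := by
  unfold numf NTr
  rw [show Finset.range k = Finset.range ((j + 1) + (k - (j + 1))) from by congr 1; omega]
  rw [Finset.sum_range_add, Finset.sum_range_succ]
  have hupj : Function.update δ j x j = x := Function.update_self j x δ
  have hprodj : ∀ n : ℕ, n ≤ j → (∏ m ∈ Finset.range n, Function.update δ j x m)
      = ∏ m ∈ Finset.range n, δ m := by
    intro n hn
    apply Finset.prod_congr rfl
    intro m hm
    simp only [Finset.mem_range] at hm
    have hne : m ≠ j := by omega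
    exact Function.update_of_ne hne x δ
  have h1 : ∑ i ∈ Finset.range j,
      (1 - ε) ^ (i + 1) * H2 (Function.update δ j x i) * ∏ m ∈ Finset.range i,
        Function.update δ j x m
      = ∑ i ∈ Finset.range j, (1 - ε) ^ (i + 1) * H2 (δ i) * ∏ m ∈ Finset.range i, δ m := by
    apply Finset.sum_congr rfl
    intro i hi
    simp only [Finset.mem_range] at hi
    rw [Function.update_of_ne (by omega) x δ, hprodj i (by omega)]
  have h2 : (1 - ε) ^ (j + 1) * H2 (Function.update δ j x j) * ∏ m ∈ Finset.range j,
      Function.update δ j x m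
      = ((1 - ε) ^ (j + 1) * ∏ m ∈ Finset.range j, δ m) * H2 x := by
    rw [hupj, hprodj j le_rfl]; ring
  have h3 : ∑ i ∈ Finset.range (k - (j + 1)),
      (1 - ε) ^ ((j + 1 + i) + 1) * H2 (Function.update δ j x (j + 1 + i)) *
        ∏ m ∈ Finset.range (j + 1 + i), Function.update δ j x m
      = (((1 - ε) ^ (j + 1) * ∏ m ∈ Finset.range j, δ m) *
          ∑ i ∈ Finset.range (k - (j + 1)),
            (1 - ε) ^ (i + 1) * H2 (δ (j + 1 + i)) * ∏ m ∈ Finset.range i, δ (j + 1 + m)) * x := by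
    rw [Finset.mul_sum, Finset.sum_mul]
    apply Finset.sum_congr rfl
    intro i hi
    rw [Function.update_of_ne (show j + 1 + i ≠ j from by omega) x δ]
    rw [Finset.prod_range_add]
    rw [Finset.prod_range_succ, hprodj j le_rfl, hupj]
    have hprodtail : (∏ m ∈ Finset.range i, Function.update δ j x (j + 1 + m))
        = ∏ m ∈ Finset.range i, δ (j + 1 + m) := by
      apply Finset.prod_congr rfl
      intro m hm
      exact Function.update_of_ne (show j + 1 + m ≠ j from by omega) x δ
    rw [hprodtail]
    rw [show (j + 1 + i) + 1 = (j + 1) + (i + 1) from by omega, pow_add]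
    ring
  rw [h1, h2, h3]

/-- Decomposition of the denominator under a single-coordinate update. -/
lemma denf_update (ε : ℝ) (k : ℕ) (δ : ℕ → ℝ) (j : ℕ) (hj : j < k) (x : ℝ) :
    denf ε k (Function.update δ j x)
      = (1 + ∑ i ∈ Finset.range j, (1 - ε) ^ (i + 1) * ∏ m ∈ Finset.range (i + 1), δ m)
        + (((1 - ε) ^ (j + 1) * ∏ m ∈ Finset.range j, δ m) * DTr ε k δ (j + 1)) * x := by
  unfold denf DTr
  rw [show Finset.range k = Finset.range (j + (k - j)) from by congr 1; omega]
  rw [Finset.sum_range_add]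
  have hupj : Function.update δ j x j = x := Function.update_self j x δ
  have hprodj : ∀ n : ℕ, n ≤ j → (∏ m ∈ Finset.range n, Function.update δ j x m)
      = ∏ m ∈ Finset.range n, δ m := by
    intro n hn
    apply Finset.prod_congr rfl
    intro m hm
    simp only [Finset.mem_range] at hm
    have hne : m ≠ j := by omega
    exact Function.update_of_ne hne x δ
  have h1 : ∑ i ∈ Finset.range j,
      (1 - ε) ^ (i + 1) * ∏ m ∈ Finset.range (i + 1), Function.update δ j x m
      = ∑ i ∈ Finset.range j, (1 - ε) ^ (i + 1) * ∏ m ∈ Finset.range (i + 1), δ m := by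
    apply Finset.sum_congr rfl
    intro i hi
    simp only [Finset.mem_range] at hi
    rw [hprodj (i + 1) (by omega)]
  have h2 : ∑ i ∈ Finset.range (k - j),
      (1 - ε) ^ ((j + i) + 1) * ∏ m ∈ Finset.range ((j + i) + 1), Function.update δ j x m
      = (((1 - ε) ^ (j + 1) * ∏ m ∈ Finset.range j, δ m) *
          ∑ i ∈ Finset.range (k - j), (1 - ε) ^ i * ∏ m ∈ Finset.range i, δ (j + 1 + m)) * x := by
    rw [Finset.mul_sum, Finset.sum_mul]
    apply Finset.sum_congr rfl
    intro i hi
    rw [show (j + i) + 1 = (j + 1) + i from by omega]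
    rw [Finset.prod_range_add]
    rw [Finset.prod_range_succ, hprodj j le_rfl, hupj]
    have hprodtail : (∏ m ∈ Finset.range i, Function.update δ j x (j + 1 + m))
        = ∏ m ∈ Finset.range i, δ (j + 1 + m) := by
      apply Finset.prod_congr rfl
      intro m hm
      exact Function.update_of_ne (show j + 1 + m ≠ j from by omega) x δ
    rw [hprodtail, pow_add]
    ring
  have h3 : ∑ i ∈ Finset.range (k - j), (1 - ε) ^ i * ∏ m ∈ Finset.range i, δ (j + 1 + m)
      = 1 + ∑ i ∈ Finset.range (k - (j + 1)),
          (1 - ε) ^ (i + 1) * ∏ m ∈ Finset.range (i + 1), δ (j + 1 + m) := by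
    rw [show k - j = (k - (j + 1)) + 1 from by omega, Finset.sum_range_succ']
    simp [add_comm]
  rw [h1, h2, h3]
  ring

/-- Recurrence for the tail numerator. -/
lemma NTr_succ (ε : ℝ) (k : ℕ) (δ : ℕ → ℝ) (r : ℕ) (hr : r < k) :
    NTr ε k δ r = (1 - ε) * H2 (δ r) + (1 - ε) * δ r * NTr ε k δ (r + 1) := by
  unfold NTr
  rw [show k - r = (k - (r + 1)) + 1 from by omega, Finset.sum_range_succ']
  have h0 : (1 - ε) ^ (0 + 1) * H2 (δ (r + 0)) * ∏ m ∈ Finset.range 0, δ (r + m)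
      = (1 - ε) * H2 (δ r) := by simp
  rw [h0]
  have hsum : ∑ i ∈ Finset.range (k - (r + 1)),
      (1 - ε) ^ ((i + 1) + 1) * H2 (δ (r + (i + 1))) * ∏ m ∈ Finset.range (i + 1), δ (r + m)
      = ∑ i ∈ Finset.range (k - (r + 1)), (1 - ε) * δ r *
          ((1 - ε) ^ (i + 1) * H2 (δ ((r + 1) + i)) * ∏ m ∈ Finset.range i, δ ((r + 1) + m)) := by
    apply Finset.sum_congr rfl
    intro i hi
    rw [Finset.prod_range_succ']
    rw [show r + (i + 1) = (r + 1) + i from by omega]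
    have hp : (∏ m ∈ Finset.range i, δ (r + (m + 1))) = ∏ m ∈ Finset.range i, δ ((r + 1) + m) := by
      apply Finset.prod_congr rfl
      intro m hm
      rw [show r + (m + 1) = (r + 1) + m from by omega]
    rw [hp]
    simp only [add_zero]
    ring
  rw [hsum, ← Finset.mul_sum]
  ring

/-- Recurrence for the tail denominator. -/
lemma DTr_succ (ε : ℝ) (k : ℕ) (δ : ℕ → ℝ) (r : ℕ) (hr : r < k) :
    DTr ε k δ r = 1 + (1 - ε) * δ r * DTr ε k δ (r + 1) := by
  unfold DTr
  rw [show k - r = (k - (r + 1)) + 1 from by omega, Finset.sum_range_succ']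
  have h0 : (1 - ε) ^ (0 + 1) * ∏ m ∈ Finset.range (0 + 1), δ (r + m) = (1 - ε) * δ r := by simp
  rw [h0, mul_add, mul_one, Finset.mul_sum]
  have hterm : ∀ i ∈ Finset.range (k - (r + 1)),
      (1 - ε) ^ ((i + 1) + 1) * ∏ m ∈ Finset.range ((i + 1) + 1), δ (r + m)
      = (1 - ε) * δ r * ((1 - ε) ^ (i + 1) * ∏ m ∈ Finset.range (i + 1), δ ((r + 1) + m)) := by
    intro i hi
    rw [Finset.prod_range_succ']
    have hp : (∏ m ∈ Finset.range (i + 1), δ (r + (m + 1)))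
        = ∏ m ∈ Finset.range (i + 1), δ ((r + 1) + m) := by
      apply Finset.prod_congr rfl
      intro m hm
      rw [show r + (m + 1) = (r + 1) + m from by omega]
    rw [hp]
    simp only [add_zero]
    ring
  rw [Finset.sum_congr rfl hterm]
  ring

/-- The shifted, zero-extended configuration. -/
noncomputable def sigf (δ : ℕ → ℝ) (k r : ℕ) : ℕ → ℝ :=
  fun i => if r + i < k then δ (r + i) else 0

lemma sigf_mem (δ : ℕ → ℝ) (k r : ℕ) (hδ : ∀ i < k, δ i ∈ Set.Icc (0:ℝ) 1) :
    ∀ i < k, sigf δ k r i ∈ Set.Icc (0:ℝ) 1 := by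
  intro i _
  unfold sigf
  split
  · exact hδ _ (by omega)
  · exact ⟨le_refl 0, by norm_num⟩

lemma numf_sigf (ε : ℝ) (k : ℕ) (δ : ℕ → ℝ) (r : ℕ) :
    numf ε k (sigf δ k r) = NTr ε k δ r := by
  unfold numf NTr
  rw [← Finset.sum_subset (Finset.range_subset_range.mpr (Nat.sub_le k r))
    (by
      intro i _ hi2
      simp only [Finset.mem_range] at hi2
      have : sigf δ k r i = 0 := by unfold sigf; rw [if_neg (by omega)]
      rw [this, H2_zero']
      ring)]
  apply Finset.sum_congr rfl
  intro i hi
  simp only [Finset.mem_range] at hi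
  have h1 : sigf δ k r i = δ (r + i) := by unfold sigf; rw [if_pos (by omega)]
  have h2 : (∏ m ∈ Finset.range i, sigf δ k r m) = ∏ m ∈ Finset.range i, δ (r + m) := by
    apply Finset.prod_congr rfl
    intro m hm
    simp only [Finset.mem_range] at hm
    unfold sigf; rw [if_pos (by omega)]
  rw [h1, h2]

lemma denf_sigf (ε : ℝ) (k : ℕ) (δ : ℕ → ℝ) (r : ℕ) :
    denf ε k (sigf δ k r) = DTr ε k δ r := by
  unfold denf DTr
  congr 1
  rw [← Finset.sum_subset (Finset.range_subset_range.mpr (Nat.sub_le k r))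
    (by
      intro i hi1 hi2
      simp only [Finset.mem_range] at hi1 hi2
      have hmem : k - r ∈ Finset.range (i + 1) := by simp only [Finset.mem_range]; omega
      have hz : sigf δ k r (k - r) = 0 := by unfold sigf; rw [if_neg (by omega)]
      rw [Finset.prod_eq_zero hmem hz]
      ring)]
  apply Finset.sum_congr rfl
  intro i hi
  simp only [Finset.mem_range] at hi
  have h2 : (∏ m ∈ Finset.range (i + 1), sigf δ k r m)
      = ∏ m ∈ Finset.range (i + 1), δ (r + m) := by
    apply Finset.prod_congr rfl
    intro m hm
    simp only [Finset.mem_range] at hm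
    unfold sigf; rw [if_pos (by omega)]
  rw [h2]

/-- Every maximizer has all coordinates in `(0,1)` and satisfies the first-order condition. -/
lemma max_props (ε : ℝ) (hε : ε ∈ Set.Ico (0 : ℝ) 1) (k : ℕ)
    (δ : ℕ → ℝ) (hδ : ∀ i < k, δ i ∈ Set.Icc (0 : ℝ) 1)
    (hmax : ∀ δ' : ℕ → ℝ, (∀ i < k, δ' i ∈ Set.Icc (0 : ℝ) 1) →
      Rfun ε k δ' ≤ Rfun ε k δ) :
    ∀ j, j < k → δ j ∈ Set.Ioo (0:ℝ) 1 ∧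
      Real.logb 2 ((1 - δ j) / δ j)
        = Rfun ε k δ * DTr ε k δ (j + 1) - NTr ε k δ (j + 1) := by
  obtain ⟨hε0, hε1⟩ := hε
  have hdpos : 0 < denf ε k δ := denf_pos ε k δ (by linarith) (fun i hi => (hδ i hi).1)
  have hnum_eq : numf ε k δ = Rfun ε k δ * denf ε k δ := by
    rw [Rfun_eq]; field_simp
  intro j
  induction j using Nat.strong_induction_on with
  | _ j ih =>
    intro hj
    set R := Rfun ε k δ with hR
    have hB : 0 < (1 - ε) ^ (j + 1) * ∏ m ∈ Finset.range j, δ m := by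
      apply mul_pos (pow_pos (by linarith) _)
      apply Finset.prod_pos
      intro m hm
      simp only [Finset.mem_range] at hm
      exact (ih m hm (by omega)).1.1
    set b := (1 - ε) ^ (j + 1) * ∏ m ∈ Finset.range j, δ m with hbdef
    set c := b * NTr ε k δ (j + 1) - R * (b * DTr ε k δ (j + 1)) with hcdef
    have hkey : ∀ x ∈ Set.Icc (0:ℝ) 1, b * H2 x + c * x ≤ b * H2 (δ j) + c * (δ j) := by
      intro x hx
      have hufeas : ∀ i < k, Function.update δ j x i ∈ Set.Icc (0:ℝ) 1 := by
        intro i hi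
        by_cases hij : i = j
        · subst hij; rw [Function.update_self]; exact hx
        · rw [Function.update_of_ne hij]; exact hδ i hi
      have h1 := hmax _ hufeas
      have hudpos : 0 < denf ε k (Function.update δ j x) :=
        denf_pos ε k _ (by linarith) (fun i hi => (hufeas i hi).1)
      rw [Rfun_eq] at h1
      have h2 : numf ε k (Function.update δ j x) ≤ R * denf ε k (Function.update δ j x) :=
        (div_le_iff₀ hudpos).mp h1
      rw [numf_update ε k δ j hj x, denf_update ε k δ j hj x] at h2
      have h3 := numf_update ε k δ j hj (δ j)
      have h4 := denf_update ε k δ j hj (δ j)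
      rw [Function.update_eq_self] at h3 h4
      have h5 : numf ε k δ = R * denf ε k δ := hnum_eq
      rw [h3, h4] at h5
      rw [hcdef, hbdef]
      nlinarith [h2, h5]
    obtain ⟨hIoo, hlog⟩ := argmax_lemma b c hB (δ j) (hδ j hj) hkey
    refine ⟨hIoo, ?_⟩
    rw [hlog, hcdef]
    field_simp
    ring

lemma H2_identity (u : ℝ) (hu0 : 0 < u) (hu1 : u < 1) :
    u * Real.logb 2 ((1 - u) / u) - H2 u = Real.logb 2 (1 - u) := by
  rw [Real.logb_div (by linarith) (ne_of_gt hu0)]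
  unfold H2; ring

lemma logb_rpow' (x : ℝ) (hx : 0 < x) (y : ℝ) :
    Real.logb 2 (x ^ y) = y * Real.logb 2 x := by
  unfold Real.logb; rw [Real.log_rpow hx]; ring

/-- Strict bound: every coordinate of a maximizer is in `(0, 1/2)`. -/
lemma max_half (ε : ℝ) (hε : ε ∈ Set.Ico (0 : ℝ) 1) (k : ℕ)
    (δ : ℕ → ℝ) (hδ : ∀ i < k, δ i ∈ Set.Icc (0 : ℝ) 1)
    (hmax : ∀ δ' : ℕ → ℝ, (∀ i < k, δ' i ∈ Set.Icc (0 : ℝ) 1) →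
      Rfun ε k δ' ≤ Rfun ε k δ) :
    ∀ j < k, δ j ∈ Set.Ioo (0:ℝ) (1/2) := by
  intro j hj
  obtain ⟨hIoo, hlog⟩ := max_props ε hε k δ hδ hmax j hj
  set R := Rfun ε k δ with hR
  set σ := sigf δ k (j + 1) with hσ
  have hσfeas : ∀ i < k, σ i ∈ Set.Icc (0:ℝ) 1 := sigf_mem δ k (j + 1) hδ
  have hRσ : Rfun ε k σ = NTr ε k δ (j + 1) / DTr ε k δ (j + 1) := by
    rw [Rfun_eq, hσ, numf_sigf, denf_sigf]
  have hDTpos : 0 < DTr ε k δ (j + 1) := by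
    rw [← denf_sigf ε k δ (j + 1)]
    exact denf_pos ε k _ (by linarith [hε.2]) (fun i hi => (hσfeas i hi).1)
  have hle : NTr ε k δ (j + 1) ≤ R * DTr ε k δ (j + 1) := by
    have h1 := hmax σ hσfeas
    rw [hRσ] at h1
    exact (div_le_iff₀ hDTpos).mp h1
  have hne : NTr ε k δ (j + 1) ≠ R * DTr ε k δ (j + 1) := by
    intro heq
    have hRσR : Rfun ε k σ = R := by
      rw [hRσ, heq]; field_simp
    have hmaxσ : ∀ δ'' : ℕ → ℝ, (∀ i < k, δ'' i ∈ Set.Icc (0:ℝ) 1) →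
        Rfun ε k δ'' ≤ Rfun ε k σ := by
      intro d hd; rw [hRσR]; exact hmax d hd
    have hprops := max_props ε hε k σ hσfeas hmaxσ (k - (j + 1)) (by omega)
    have hzero : σ (k - (j + 1)) = 0 := by
      rw [hσ]; unfold sigf; rw [if_neg (by omega)]
    have h01 := hprops.1.1
    rw [hzero] at h01
    exact lt_irrefl 0 h01
  have hpos : 0 < R * DTr ε k δ (j + 1) - NTr ε k δ (j + 1) := by
    cases lt_or_eq_of_le hle with
    | inl h => linarith
    | inr h => exact absurd h hne
  have hratio_pos : 0 < (1 - δ j) / δ j := div_pos (by linarith [hIoo.2]) hIoo.1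
  have hgt1 : 1 < (1 - δ j) / δ j := by
    have := (Real.logb_pos_iff one_lt_two hratio_pos).mp (by rw [hlog]; linarith)
    exact this
  have : δ j < 1 - δ j := by
    rw [lt_div_iff₀ hIoo.1] at hgt1; linarith
  exact ⟨hIoo.1, by linarith⟩

/-- For every `ε ∈ [0,1)` and integer `k ≥ 1`, any maximizer of `R_ε` over `[0,1]^k`
has all coordinates in the open interval `(0, 1/2)` and satisfies the recursion (∗). -/
theorem maximizer_interior_and_recursion
    (ε : ℝ) (hε : ε ∈ Set.Ico (0 : ℝ) 1) (k : ℕ) (hk : 1 ≤ k)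
    (δ : ℕ → ℝ) (hδ : ∀ i < k, δ i ∈ Set.Icc (0 : ℝ) 1)
    (hmax : ∀ δ' : ℕ → ℝ, (∀ i < k, δ' i ∈ Set.Icc (0 : ℝ) 1) →
      Rfun ε k δ' ≤ Rfun ε k δ) :
    (∀ j < k, δ j ∈ Set.Ioo (0 : ℝ) (1 / 2)) ∧ SatisfiesRec ε k δ := by
  have hhalf := max_half ε hε k δ hδ hmax
  refine ⟨hhalf, ?_⟩
  intro j hjk
  obtain ⟨hε0, hε1⟩ := hε
  set R := Rfun ε k δ with hR
  -- stationarity at j and j+1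
  obtain ⟨hIooj, hlogj⟩ := max_props ε ⟨hε0, hε1⟩ k δ hδ hmax j (by omega)
  obtain ⟨hIooj1, hlogj1⟩ := max_props ε ⟨hε0, hε1⟩ k δ hδ hmax (j + 1) (by omega)
  set u := δ (j + 1) with hu
  set v := δ j with hv
  set c : ℝ := if j + 2 = k then 1 else 1 - δ (j + 2) with hc
  have hu0 : 0 < u := hIooj1.1
  have hu1 : u < 1 := hIooj1.2
  have hv0 : 0 < v := hIooj.1
  have hv1 : v < 1 := hIooj.2
  have hcpos : 0 < c := by
    rw [hc]
    split
    · norm_num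
    · have h2 := hhalf (j + 2) (by omega)
      have := h2.2
      linarith
  -- master relation at j
  have hNT := NTr_succ ε k δ (j + 1) (by omega)
  have hDT := DTr_succ ε k δ (j + 1) (by omega)
  have hmaster : Real.logb 2 ((1 - v) / v)
      = R + (1 - ε) * Real.logb 2 (1 - u) := by
    rw [hlogj, hNT, hDT]
    have hid := H2_identity u hu0 hu1
    rw [hlogj1] at hid
    nlinarith [hid]
  -- the value of logb at j+1
  have hlogj1' : Real.logb 2 ((1 - u) / u) = R + (1 - ε) * Real.logb 2 c := by
    rw [hc]
    by_cases hcase : j + 2 = k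
    · rw [if_pos hcase, hlogj1, hcase, NTr_k, DTr_k]
      simp; exact hR.symm
    · rw [if_neg hcase]
      obtain ⟨hIooj2, hlogj2⟩ := max_props ε ⟨hε0, hε1⟩ k δ hδ hmax (j + 2) (by omega)
      have hNT2 := NTr_succ ε k δ (j + 2) (by omega)
      have hDT2 := DTr_succ ε k δ (j + 2) (by omega)
      have hid2 := H2_identity (δ (j + 2)) hIooj2.1 hIooj2.2
      rw [hlogj2] at hid2
      rw [hlogj1, hNT2, hDT2]
      have : j + 1 + 1 = j + 2 := by omega
      rw [this]
      nlinarith [hid2]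
  -- combine
  have hcomb : Real.logb 2 ((1 - v) / v)
      = Real.logb 2 ((1 - u) / u) + (1 - ε) * (Real.logb 2 (1 - u) - Real.logb 2 c) := by
    rw [hmaster, hlogj1']; ring
  set Y : ℝ := (1 - u) * ((1 - u) / c) ^ (1 - ε) with hY
  have hYpos : 0 < Y := by
    apply mul_pos (by linarith)
    exact Real.rpow_pos_of_pos (div_pos (by linarith) hcpos) _
  have hlogY : Real.logb 2 (Y / u)
      = Real.logb 2 ((1 - u) / u) + (1 - ε) * (Real.logb 2 (1 - u) - Real.logb 2 c) := by
    rw [Real.logb_div (ne_of_gt hYpos) (ne_of_gt hu0)]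
    rw [hY, Real.logb_mul (by linarith) (ne_of_gt (Real.rpow_pos_of_pos (div_pos (by linarith) hcpos) _))]
    rw [logb_rpow' _ (div_pos (by linarith) hcpos)]
    rw [Real.logb_div (by linarith) (ne_of_gt hcpos)]
    rw [Real.logb_div (by linarith : (1:ℝ) - u ≠ 0) (ne_of_gt hu0)]
    ring
  have hloge : Real.logb 2 ((1 - v) / v) = Real.logb 2 (Y / u) := by
    rw [hcomb, hlogY]
  have hratio : (1 - v) / v = Y / u := by
    have hinj := Real.logb_injOn_pos (by norm_num : (1:ℝ) < 2)
    exact hinj (Set.mem_Ioi.mpr (div_pos (by linarith) hv0))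
      (Set.mem_Ioi.mpr (div_pos hYpos hu0)) hloge
  -- final algebra
  show v = u / (u + (1 - u) * ((1 - u) / c) ^ (1 - ε))
  rw [← hY]
  have h1 : (1 - v) * u = v * Y := by
    rw [div_eq_div_iff (ne_of_gt hv0) (ne_of_gt hu0)] at hratio
    linarith [hratio]
  rw [eq_div_iff (by positivity : u + Y ≠ 0)]
  linarith [h1]

end Aux
end

section
/- The maximum of the function δ ↦ H₂(δ)/(2 + 2δ) over the interval [0, 1] is attained at the unique point δ* = (3 − √5)/2, and this maximizer satisfies 1/3 < δ* < 1/2. -/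
lemma hasDerivAt_H2 {x : ℝ} (hx0 : 0 < x) (hx1 : x < 1) :
    HasDerivAt H2 ((Real.log (1 - x) - Real.log x) / Real.log 2) x := by
  have h1 : HasDerivAt (fun y : ℝ => y * Real.log y) (Real.log x + 1) x :=
    Real.hasDerivAt_mul_log hx0.ne'
  have h3 : HasDerivAt (fun y : ℝ => y * Real.log y) (Real.log (1 - x) + 1) (1 - x) :=
    Real.hasDerivAt_mul_log (by linarith)
  have h4 : HasDerivAt (fun y : ℝ => 1 - y) (-1) x := by
    simpa using (hasDerivAt_id x).const_sub 1
  have h2 : HasDerivAt (fun y : ℝ => (1 - y) * Real.log (1 - y))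
      ((Real.log (1 - x) + 1) * (-1)) x := h3.comp x h4
  have h5 := (h1.neg.sub h2).div_const (Real.log 2)
  have heq : (fun y : ℝ => (-(y * Real.log y) - (1 - y) * Real.log (1 - y)) / Real.log 2)
      = H2 := by
    funext y; rw [H2_eq]
  replace h5 : HasDerivAt (fun y : ℝ => (-(y * Real.log y) - (1 - y) * Real.log (1 - y)) / Real.log 2)
      ((-(Real.log x + 1) - (Real.log (1 - x) + 1) * -1) / Real.log 2) x := h5
  rw [heq] at h5
  convert h5 using 1
  ring

lemma hasDerivAt_F {x : ℝ} (hx0 : 0 < x) (hx1 : x < 1) :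
    HasDerivAt (fun δ : ℝ => H2 δ / (2 + 2 * δ))
      (((Real.log (1 - x) - Real.log x) / Real.log 2 * (2 + 2 * x) - H2 x * 2)
        / (2 + 2 * x) ^ 2) x := by
  have hd : HasDerivAt (fun δ : ℝ => 2 + 2 * δ) 2 x := by
    simpa using ((hasDerivAt_id x).const_mul (2 : ℝ)).const_add (2 : ℝ)
  exact (hasDerivAt_H2 hx0 hx1).div hd (by positivity)

lemma sqrt5_sq : Real.sqrt 5 * Real.sqrt 5 = 5 := Real.mul_self_sqrt (by norm_num)

lemma num_pos {x : ℝ} (hx0 : 0 < x) (hxa : x < (3 - Real.sqrt 5) / 2) :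
    0 < (Real.log (1 - x) - Real.log x) / Real.log 2 * (2 + 2 * x) - H2 x * 2 := by
  have h5 := sqrt5_sq
  have h5nn := Real.sqrt_nonneg 5
  have hx1 : x < 1 := by nlinarith
  have hl2 : 0 < Real.log 2 := Real.log_pos one_lt_two
  have hq : x < (1 - x) ^ 2 := by nlinarith
  have key : Real.log x < 2 * Real.log (1 - x) := by
    calc Real.log x < Real.log ((1 - x) ^ 2) := Real.log_lt_log hx0 hq
      _ = 2 * Real.log (1 - x) := by
          rw [Real.log_pow]; norm_num
  rw [H2_eq]
  have hrw : (Real.log (1 - x) - Real.log x) / Real.log 2 * (2 + 2 * x)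
      - (-(x * Real.log x) - (1 - x) * Real.log (1 - x)) / Real.log 2 * 2
      = 2 * (2 * Real.log (1 - x) - Real.log x) / Real.log 2 := by
    field_simp
    ring
  rw [hrw]
  apply div_pos _ hl2
  linarith

lemma num_neg {x : ℝ} (hxa : (3 - Real.sqrt 5) / 2 < x) (hx1 : x < 1) :
    (Real.log (1 - x) - Real.log x) / Real.log 2 * (2 + 2 * x) - H2 x * 2 < 0 := by
  have h5 := sqrt5_sq
  have h5nn := Real.sqrt_nonneg 5
  have hx0 : 0 < x := by nlinarith
  have hl2 : 0 < Real.log 2 := Real.log_pos one_lt_two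
  have hq : (1 - x) ^ 2 < x := by nlinarith
  have key : 2 * Real.log (1 - x) < Real.log x := by
    calc 2 * Real.log (1 - x) = Real.log ((1 - x) ^ 2) := by rw [Real.log_pow]; norm_num
      _ < Real.log x := Real.log_lt_log (by nlinarith) hq
  rw [H2_eq]
  have hrw : (Real.log (1 - x) - Real.log x) / Real.log 2 * (2 + 2 * x)
      - (-(x * Real.log x) - (1 - x) * Real.log (1 - x)) / Real.log 2 * 2
      = 2 * (2 * Real.log (1 - x) - Real.log x) / Real.log 2 := by
    field_simp
    ring
  rw [hrw]
  apply div_neg_of_neg_of_pos _ hl2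
  linarith

lemma continuous_H2 : Continuous H2 := by
  have : H2 = fun x : ℝ => (Real.negMulLog x + Real.negMulLog (1 - x)) / Real.log 2 := by
    funext x
    rw [H2_eq]
    simp [Real.negMulLog]
    ring
  rw [this]
  fun_prop

/-- The maximum of `δ ↦ H₂(δ)/(2+2δ)` over `[0,1]` is attained at the unique point
`δ* = (3−√5)/2`, and this maximizer satisfies `1/3 < δ* < 1/2`. -/
theorem noncausal_objective_unique_maximizer :
    IsGreatest ((fun δ : ℝ => H2 δ / (2 + 2 * δ)) '' Set.Icc 0 1)
      (H2 ((3 - Real.sqrt 5) / 2) / (2 + 2 * ((3 - Real.sqrt 5) / 2))) ∧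
    (3 - Real.sqrt 5) / 2 ∈ Set.Icc (0 : ℝ) 1 ∧
    (∀ x ∈ Set.Icc (0 : ℝ) 1,
      H2 x / (2 + 2 * x) = H2 ((3 - Real.sqrt 5) / 2) / (2 + 2 * ((3 - Real.sqrt 5) / 2)) →
      x = (3 - Real.sqrt 5) / 2) ∧
    1 / 3 < (3 - Real.sqrt 5) / 2 ∧ (3 - Real.sqrt 5) / 2 < 1 / 2 := by
  have h5 := sqrt5_sq
  have h5nn := Real.sqrt_nonneg 5
  set a : ℝ := (3 - Real.sqrt 5) / 2 with ha_def
  set F : ℝ → ℝ := fun δ : ℝ => H2 δ / (2 + 2 * δ) with hF_def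
  have ha13 : 1 / 3 < a := by rw [ha_def]; nlinarith
  have ha12 : a < 1 / 2 := by rw [ha_def]; nlinarith
  have ha0 : (0 : ℝ) ≤ a := by linarith
  have ha1 : a ≤ 1 := by linarith
  have hcontF : ContinuousOn F (Set.Icc 0 1) := by
    apply ContinuousOn.div (continuous_H2.continuousOn)
      (by fun_prop)
    intro x hx
    have := hx.1
    exact ne_of_gt (by linarith)
  have hmono : StrictMonoOn F (Set.Icc 0 a) := by
    apply strictMonoOn_of_deriv_pos (convex_Icc 0 a)
      (hcontF.mono (Set.Icc_subset_Icc le_rfl ha1))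
    intro x hx
    rw [interior_Icc] at hx
    have hx1 : x < 1 := lt_of_lt_of_le hx.2 ha1
    rw [(hasDerivAt_F hx.1 hx1).deriv]
    exact div_pos (num_pos hx.1 hx.2) (pow_pos (by linarith [hx.1]) 2)
  have hanti : StrictAntiOn F (Set.Icc a 1) := by
    apply strictAntiOn_of_deriv_neg (convex_Icc a 1)
      (hcontF.mono (Set.Icc_subset_Icc ha0 le_rfl))
    intro x hx
    rw [interior_Icc] at hx
    have hx0 : 0 < x := lt_of_le_of_lt ha0 hx.1
    rw [(hasDerivAt_F hx0 hx.2).deriv]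
    exact div_neg_of_neg_of_pos (num_neg hx.1 hx.2) (pow_pos (by linarith [hx.1]) 2)
  have hub : ∀ x ∈ Set.Icc (0 : ℝ) 1, F x ≤ F a := by
    intro x hx
    rcases le_or_gt x a with h | h
    · exact hmono.monotoneOn ⟨hx.1, h⟩ ⟨ha0, le_rfl⟩ h
    · exact hanti.antitoneOn ⟨le_rfl, ha1⟩ ⟨h.le, hx.2⟩ h.le
  refine ⟨⟨⟨a, ⟨ha0, ha1⟩, rfl⟩, ?_⟩, ⟨ha0, ha1⟩, ?_, ha13, ha12⟩
  · rintro y ⟨x, hx, rfl⟩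
    exact hub x hx
  · intro x hx heq
    by_contra hne
    rcases lt_or_gt_of_ne hne with h | h
    · exact ne_of_lt (hmono ⟨hx.1, h.le⟩ ⟨ha0, le_rfl⟩ h) heq
    · exact ne_of_lt (hanti ⟨le_rfl, ha1⟩ ⟨h.le, hx.2⟩ h) heq
end
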